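/- (Corollary 3, conservation law) Fix d ≥ 1 and an onsite symmetry (G, u), and let Ω be a flow (satisfying flow properties (1)–(4)). Let Λ be a finite metric space of sites, let U be a G-symmetric strict LPU on Λ with operator spreading length ξ, and let A, B ⊆ Λ. If (∂_{4ξ} A) ∩ B = ∅ or A ∩ (∂_{4ξ} B) = ∅, then Ω^Λ_{A,B}(U) = 0. -/

import Mathlib

open Matrix

/-- A matrix on the many-body space `ι = Λ → Fin d` is supported on `S ⊆ Λ` if its entries
vanish whenever the two configurations differ at a site outside `S`, and otherwise depend
only on the restrictions of the configurations to `S`. -/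
def SupportedOn {Λ : Type*} {d : ℕ} (S : Set Λ)
    (M : Matrix (Λ → Fin d) (Λ → Fin d) ℂ) : Prop :=
  (∀ x y, (∃ r ∉ S, x r ≠ y r) → M x y = 0) ∧
  (∀ x y x' y', (∀ r ∈ S, x r = x' r) → (∀ r ∈ S, y r = y' r) →
    (∀ r ∉ S, x r = y r) → (∀ r ∉ S, x' r = y' r) → M x y = M x' y')

/-- A matrix is unitary if `Mᴴ M = 1 = M Mᴴ`. -/
def IsUnitaryMat {ι : Type*} [Fintype ι] [DecidableEq ι] (M : Matrix ι ι ℂ) : Prop :=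
  Mᴴ * M = 1 ∧ M * Mᴴ = 1

/-- The global onsite symmetry operator `U_g`, with entries `∏_r u(g)_{x(r),y(r)}`. -/
def symOp {Λ : Type*} [Fintype Λ] {d : ℕ} {G : Type*}
    (u : G → Matrix (Fin d) (Fin d) ℂ) (g : G) :
    Matrix (Λ → Fin d) (Λ → Fin d) ℂ :=
  Matrix.of fun x y => ∏ r, u g (x r) (y r)

/-- A matrix is `G`-symmetric if it commutes with every global symmetry operator. -/
def IsGSymm {Λ : Type*} [Fintype Λ] [DecidableEq Λ] {d : ℕ} {G : Type*}
    (u : G → Matrix (Fin d) (Fin d) ℂ)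
    (M : Matrix (Λ → Fin d) (Λ → Fin d) ℂ) : Prop :=
  ∀ g, M * symOp u g = symOp u g * M

/-- The `ℓ`-thickened boundary `∂_ℓ S = {r : dist(r,S) ≤ ℓ and dist(r,Λ∖S) ≤ ℓ}`. -/
def thickBd {Λ : Type*} [MetricSpace Λ] (ℓ : ℝ) (S : Set Λ) : Set Λ :=
  {r | (∃ s ∈ S, dist r s ≤ ℓ) ∧ (∃ s ∈ Sᶜ, dist r s ≤ ℓ)}

/-- A strict locality-preserving unitary with operator spreading length `ξ`: conjugation
maps any operator supported on a single site `r` to one supported in the closed ball of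
radius `ξ` around `r`. -/
def IsStrictLPU {Λ : Type*} [Fintype Λ] [DecidableEq Λ] [MetricSpace Λ] {d : ℕ}
    (ξ : ℝ) (U : Matrix (Λ → Fin d) (Λ → Fin d) ℂ) : Prop :=
  IsUnitaryMat U ∧ ∀ (r : Λ) (O : Matrix (Λ → Fin d) (Λ → Fin d) ℂ),
    SupportedOn {r} O → SupportedOn (Metric.closedBall r ξ) (Uᴴ * O * U)

/-- A flow: an assignment, to every finite lattice `Λ'`, subsets `A, B ⊆ Λ'` and
`G`-symmetric unitary `U` on `Λ' → Fin d`, of a real number `Ω^{Λ'}_{A,B}(U)`, satisfying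
the four defining properties of Definition 1. -/
structure LatticeFlow (d : ℕ) (G : Type) [Group G] (u : G → Matrix (Fin d) (Fin d) ℂ) where
  omega : (Λ' : Type) → [Fintype Λ'] → [DecidableEq Λ'] → Set Λ' → Set Λ' →
    Matrix (Λ' → Fin d) (Λ' → Fin d) ℂ → ℝ
  /-- (1): invariance under left multiplication by `G`-symmetric unitaries supported on
  `A` or on its complement. -/
  left_inv : ∀ (Λ' : Type) [Fintype Λ'] [DecidableEq Λ'] (A B : Set Λ')
    (U V : Matrix (Λ' → Fin d) (Λ' → Fin d) ℂ),
    IsUnitaryMat U → IsGSymm u U → IsUnitaryMat V → IsGSymm u V →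
    (SupportedOn A V ∨ SupportedOn Aᶜ V) →
    omega Λ' A B (V * U) = omega Λ' A B U
  /-- (2): invariance under right multiplication by `G`-symmetric unitaries supported on
  `B` or on its complement. -/
  right_inv : ∀ (Λ' : Type) [Fintype Λ'] [DecidableEq Λ'] (A B : Set Λ')
    (U V : Matrix (Λ' → Fin d) (Λ' → Fin d) ℂ),
    IsUnitaryMat U → IsGSymm u U → IsUnitaryMat V → IsGSymm u V →
    (SupportedOn B V ∨ SupportedOn Bᶜ V) →
    omega Λ' A B (U * V) = omega Λ' A B U
  /-- (3): additivity under stacking (disjoint-union lattices and Kronecker products). -/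
  stacking : ∀ (Λ₁ Λ₂ : Type) [Fintype Λ₁] [DecidableEq Λ₁] [Fintype Λ₂] [DecidableEq Λ₂]
    (A₁ B₁ : Set Λ₁) (A₂ B₂ : Set Λ₂)
    (U₁ : Matrix (Λ₁ → Fin d) (Λ₁ → Fin d) ℂ) (U₂ : Matrix (Λ₂ → Fin d) (Λ₂ → Fin d) ℂ),
    IsUnitaryMat U₁ → IsGSymm u U₁ → IsUnitaryMat U₂ → IsGSymm u U₂ →
    omega (Λ₁ ⊕ Λ₂) (Sum.inl '' A₁ ∪ Sum.inr '' A₂) (Sum.inl '' B₁ ∪ Sum.inr '' B₂)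
      (Matrix.reindex (Equiv.sumArrowEquivProdArrow Λ₁ Λ₂ (Fin d)).symm
        (Equiv.sumArrowEquivProdArrow Λ₁ Λ₂ (Fin d)).symm
        (Matrix.kroneckerMap (· * ·) U₁ U₂)) =
      omega Λ₁ A₁ B₁ U₁ + omega Λ₂ A₂ B₂ U₂
  /-- (4): normalization `Ω_{A,B}(𝟙) = 0`. -/
  norm_one : ∀ (Λ' : Type) [Fintype Λ'] [DecidableEq Λ'] (A B : Set Λ'),
    omega Λ' A B 1 = 0

set_option linter.unusedSectionVars false
set_option linter.unusedVariables false



namespace FlowAux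

attribute [local instance] Classical.propDecidable

variable {Λ : Type*} [Fintype Λ] [DecidableEq Λ] {d : ℕ}

lemma supportedOn_univ (M : Matrix (Λ → Fin d) (Λ → Fin d) ℂ) :
    SupportedOn Set.univ M := by
  constructor
  · rintro x y ⟨r, hr, -⟩; exact absurd (Set.mem_univ r) hr
  · intro x y x' y' hx hy _ _
    have h1 : x = x' := funext fun r => hx r (Set.mem_univ r)
    have h2 : y = y' := funext fun r => hy r (Set.mem_univ r)
    rw [h1, h2]

lemma SupportedOn.mono {S T : Set Λ} {M : Matrix (Λ → Fin d) (Λ → Fin d) ℂ}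
    (hST : S ⊆ T) (h : SupportedOn S M) : SupportedOn T M := by
  constructor
  · rintro x y ⟨r, hr, hne⟩
    exact h.1 x y ⟨r, fun hS => hr (hST hS), hne⟩
  · intro x y x' y' hx hy hxy hxy'
    by_cases hc : ∀ r, r ∉ S → x r = y r
    · refine h.2 x y x' y' (fun r hr => hx r (hST hr)) (fun r hr => hy r (hST hr)) hc ?_
      intro r hr
      by_cases hrT : r ∈ T
      · rw [← hx r hrT, ← hy r hrT]; exact hc r hr
      · exact hxy' r hrT
    · push_neg at hc
      obtain ⟨r, hrS, hne⟩ := hc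
      have hrT : r ∈ T := by
        by_contra hrT
        exact hne (hxy r hrT)
      have hne' : x' r ≠ y' r := by
        rw [← hx r hrT, ← hy r hrT]; exact hne
      rw [h.1 x y ⟨r, hrS, hne⟩, h.1 x' y' ⟨r, hrS, hne'⟩]

lemma supportedOn_one (S : Set Λ) : SupportedOn S (1 : Matrix (Λ → Fin d) (Λ → Fin d) ℂ) := by
  constructor
  · rintro x y ⟨r, -, hne⟩
    apply Matrix.one_apply_ne
    intro h; exact hne (congrFun h r)
  · intro x y x' y' hx hy hxy hxy'
    have hiff : (x = y) ↔ (x' = y') := by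
      constructor
      · intro h
        funext r
        by_cases hr : r ∈ S
        · rw [← hx r hr, ← hy r hr]; exact congrFun h r
        · exact hxy' r hr
      · intro h
        funext r
        by_cases hr : r ∈ S
        · rw [hx r hr, hy r hr]; exact congrFun h r
        · exact hxy r hr
    simp only [Matrix.one_apply]
    exact if_congr hiff rfl rfl

lemma SupportedOn.mul {S : Set Λ} {M N : Matrix (Λ → Fin d) (Λ → Fin d) ℂ}
    (hM : SupportedOn S M) (hN : SupportedOn S N) : SupportedOn S (M * N) := by
  constructor
  · rintro x y ⟨r, hr, hne⟩
    rw [Matrix.mul_apply]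
    apply Finset.sum_eq_zero
    intro z _
    by_cases hz : z r = x r
    · have : N z y = 0 := hN.1 z y ⟨r, hr, by rw [hz]; exact hne⟩
      rw [this, mul_zero]
    · have : M x z = 0 := hM.1 x z ⟨r, hr, fun h => hz h.symm⟩
      rw [this, zero_mul]
  · intro x y x' y' hx hy hxy hxy'
    rw [Matrix.mul_apply, Matrix.mul_apply]
    set Ψ : (Λ → Fin d) ≃ (Λ → Fin d) :=
      Equiv.piCongrRight (fun r => if r ∈ S then Equiv.refl (Fin d)
        else Equiv.swap (x r) (x' r)) with hΨ
    have hΨ_mem : ∀ (z : Λ → Fin d) (r : Λ), r ∈ S → Ψ z r = z r := by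
      intro z r hr
      simp [hΨ, Equiv.piCongrRight, hr]
    have hΨ_not : ∀ (z : Λ → Fin d) (r : Λ), r ∉ S → Ψ z r = Equiv.swap (x r) (x' r) (z r) := by
      intro z r hr
      simp [hΨ, Equiv.piCongrRight, hr]
    rw [← Equiv.sum_comp Ψ (fun z => M x' z * N z y')]
    apply Finset.sum_congr rfl
    intro z _
    by_cases hz : ∀ r, r ∉ S → z r = x r
    · have e1 : M x z = M x' (Ψ z) := by
        refine hM.2 x z x' (Ψ z) hx (fun r hr => (hΨ_mem z r hr).symm)
          (fun r hr => (hz r hr).symm) ?_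
        intro r hr
        rw [hΨ_not z r hr, hz r hr, Equiv.swap_apply_left]
      have e2 : N z y = N (Ψ z) y' := by
        refine hN.2 z y (Ψ z) y' (fun r hr => (hΨ_mem z r hr).symm) hy
          (fun r hr => (hz r hr).trans (hxy r hr)) ?_
        intro r hr
        rw [hΨ_not z r hr, hz r hr, Equiv.swap_apply_left]
        exact hxy' r hr
      rw [e1, e2]
    · push_neg at hz
      obtain ⟨r, hr, hne⟩ := hz
      have h1 : M x z = 0 := hM.1 x z ⟨r, hr, fun h => hne h.symm⟩
      have h2 : M x' (Ψ z) = 0 := by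
        apply hM.1 x' (Ψ z)
        refine ⟨r, hr, ?_⟩
        rw [hΨ_not z r hr]
        by_cases hzx' : z r = x' r
        · rw [hzx', Equiv.swap_apply_right]
          intro h
          exact hne (hzx'.trans h)
        · rw [Equiv.swap_apply_of_ne_of_ne hne hzx']
          exact fun h => hzx' h.symm
      rw [h1, h2, zero_mul, zero_mul]

lemma supportedOn_sum {S : Set Λ} {ι : Type*} (t : Finset ι)
    (f : ι → Matrix (Λ → Fin d) (Λ → Fin d) ℂ)
    (hf : ∀ i ∈ t, SupportedOn S (f i)) : SupportedOn S (∑ i ∈ t, f i) := by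
  constructor
  · intro x y h
    rw [Matrix.sum_apply]
    exact Finset.sum_eq_zero fun i hi => (hf i hi).1 x y h
  · intro x y x' y' hx hy hxy hxy'
    rw [Matrix.sum_apply, Matrix.sum_apply]
    exact Finset.sum_congr rfl fun i hi => (hf i hi).2 x y x' y' hx hy hxy hxy'

end FlowAux


namespace FlowAux

attribute [local instance] Classical.propDecidable

variable {Λ : Type*} [Fintype Λ] [DecidableEq Λ] {d : ℕ}

/-- the site involution swapping the two copies of every site in `X`. -/
noncomputable def tauF (X : Set Λ) : Λ ⊕ Λ → Λ ⊕ Λ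
  | Sum.inl r => if r ∈ X then Sum.inr r else Sum.inl r
  | Sum.inr r => if r ∈ X then Sum.inl r else Sum.inr r

lemma tauF_comp (X Y : Set Λ) (s : Λ ⊕ Λ) : tauF X (tauF Y s) = tauF (symmDiff X Y) s := by
  cases s with
  | inl r =>
    by_cases hX : r ∈ X <;> by_cases hY : r ∈ Y <;>
      simp [tauF, hX, hY, Set.mem_symmDiff]
  | inr r =>
    by_cases hX : r ∈ X <;> by_cases hY : r ∈ Y <;>
      simp [tauF, hX, hY, Set.mem_symmDiff]

lemma tauF_empty (s : Λ ⊕ Λ) : tauF (∅ : Set Λ) s = s := by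
  cases s <;> simp [tauF]

lemma tauF_invol (X : Set Λ) (s : Λ ⊕ Λ) : tauF X (tauF X s) = s := by
  rw [tauF_comp, symmDiff_self]
  exact tauF_empty s

/-- the tauF equivalence -/
noncomputable def tauE (X : Set Λ) : (Λ ⊕ Λ) ≃ (Λ ⊕ Λ) :=
  ⟨tauF X, tauF X, tauF_invol X, tauF_invol X⟩

lemma tauF_not_mem {X : Set Λ} {s : Λ ⊕ Λ}
    (h : s ∉ Sum.inl '' X ∪ Sum.inr '' X) : tauF X s = s := by
  cases s with
  | inl r =>
    have : r ∉ X := fun hr => h (Or.inl ⟨r, hr, rfl⟩)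
    simp [tauF, this]
  | inr r =>
    have : r ∉ X := fun hr => h (Or.inr ⟨r, hr, rfl⟩)
    simp [tauF, this]

lemma tauF_mem_image {X : Set Λ} {s : Λ ⊕ Λ}
    (h : s ∈ Sum.inl '' X ∪ Sum.inr '' X) :
    tauF X s ∈ Sum.inl '' X ∪ Sum.inr '' X := by
  cases s with
  | inl r =>
    have : r ∈ X := by
      rcases h with ⟨t, ht, hte⟩ | ⟨t, ht, hte⟩
      · cases hte; exact ht
      · cases hte
    simp only [tauF, if_pos this]
    exact Or.inr ⟨r, this, rfl⟩
  | inr r =>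
    have : r ∈ X := by
      rcases h with ⟨t, ht, hte⟩ | ⟨t, ht, hte⟩
      · cases hte
      · cases hte; exact ht
    simp only [tauF, if_pos this]
    exact Or.inl ⟨r, this, rfl⟩

/-- the swap unitary exchanging the two copies for all sites in `X`. -/
noncomputable def SW (d : ℕ) (X : Set Λ) : Matrix ((Λ ⊕ Λ) → Fin d) ((Λ ⊕ Λ) → Fin d) ℂ :=
  Matrix.of fun x y => if y = x ∘ tauF X then 1 else 0

lemma SW_mul (X Y : Set Λ) : SW d X * SW d Y = SW d (symmDiff X Y) := by
  ext x y
  rw [Matrix.mul_apply]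
  rw [Finset.sum_eq_single (x ∘ tauF X)]
  · show (if (x ∘ tauF X : (Λ⊕Λ) → Fin d) = x ∘ tauF X then (1:ℂ) else 0) *
      (if y = (x ∘ tauF X) ∘ tauF Y then 1 else 0) = _
    rw [if_pos rfl, one_mul]
    have : ((x ∘ tauF X) ∘ tauF Y : (Λ⊕Λ) → Fin d) = x ∘ tauF (symmDiff X Y) := by
      funext s
      show x (tauF X (tauF Y s)) = x (tauF (symmDiff X Y) s)
      rw [tauF_comp]
    rw [this]
    rfl
  · intro z _ hz
    show (if z = x ∘ tauF X then (1:ℂ) else 0) * _ = 0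
    rw [if_neg hz, zero_mul]
  · intro h
    exact absurd (Finset.mem_univ _) h

lemma SW_empty : SW d (∅ : Set Λ) = 1 := by
  ext x y
  show (if y = x ∘ tauF ∅ then (1:ℂ) else 0) = _
  have : (x ∘ tauF (∅ : Set Λ) : (Λ⊕Λ) → Fin d) = x := funext fun s => by
    show x (tauF ∅ s) = x s
    rw [tauF_empty]
  rw [this, Matrix.one_apply]
  exact if_congr eq_comm rfl rfl

lemma SW_conjTranspose (X : Set Λ) : (SW d X)ᴴ = SW d X := by
  ext x y
  show star (if x = y ∘ tauF X then (1:ℂ) else 0) = (if y = x ∘ tauF X then 1 else 0)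
  have hiff : (x = y ∘ tauF X) ↔ (y = x ∘ tauF X) := by
    constructor
    · intro h
      funext s
      show y s = x (tauF X s)
      rw [congrFun h (tauF X s)]
      show y s = y (tauF X (tauF X s))
      rw [tauF_invol]
    · intro h
      funext s
      show x s = y (tauF X s)
      rw [congrFun h (tauF X s)]
      show x s = x (tauF X (tauF X s))
      rw [tauF_invol]
  rw [if_congr hiff rfl rfl]
  split <;> simp

lemma SW_unitary (X : Set Λ) : IsUnitaryMat (SW d X) := by
  constructor <;>
  · rw [SW_conjTranspose, SW_mul, symmDiff_self]
    exact SW_empty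

lemma SW_mul_apply (X : Set Λ) (M : Matrix ((Λ⊕Λ) → Fin d) ((Λ⊕Λ) → Fin d) ℂ)
    (x y : (Λ⊕Λ) → Fin d) : (SW d X * M) x y = M (x ∘ tauF X) y := by
  rw [Matrix.mul_apply]
  rw [Finset.sum_eq_single (x ∘ tauF X)]
  · show (if (x ∘ tauF X : (Λ⊕Λ) → Fin d) = x ∘ tauF X then (1:ℂ) else 0) * _ = _
    rw [if_pos rfl, one_mul]
  · intro z _ hz
    show (if z = x ∘ tauF X then (1:ℂ) else 0) * _ = 0
    rw [if_neg hz, zero_mul]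
  · intro h
    exact absurd (Finset.mem_univ _) h

lemma mul_SW_apply (X : Set Λ) (M : Matrix ((Λ⊕Λ) → Fin d) ((Λ⊕Λ) → Fin d) ℂ)
    (x y : (Λ⊕Λ) → Fin d) : (M * SW d X) x y = M x (y ∘ tauF X) := by
  rw [Matrix.mul_apply]
  rw [Finset.sum_eq_single (y ∘ tauF X)]
  · show M x _ * (if y = (y ∘ tauF X : (Λ⊕Λ) → Fin d) ∘ tauF X then (1:ℂ) else 0) = _
    have : ((y ∘ tauF X : (Λ⊕Λ) → Fin d) ∘ tauF X) = y := funext fun s => by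
      show y (tauF X (tauF X s)) = y s
      rw [tauF_invol]
    rw [this, if_pos rfl, mul_one]
  · intro z _ hz
    show M x z * (if y = z ∘ tauF X then (1:ℂ) else 0) = 0
    have : ¬ (y = z ∘ tauF X) := by
      intro h
      apply hz
      funext s
      show z s = y (tauF X s)
      rw [congrFun h (tauF X s)]
      show z s = z (tauF X (tauF X s))
      rw [tauF_invol]
    rw [if_neg this, mul_zero]
  · intro h
    exact absurd (Finset.mem_univ _) h

lemma supportedOn_SW (X : Set Λ) :
    SupportedOn (Sum.inl '' X ∪ Sum.inr '' X) (SW d X) := by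
  constructor
  · rintro x y ⟨s, hs, hne⟩
    show (if y = x ∘ tauF X then (1:ℂ) else 0) = 0
    rw [if_neg]
    intro h
    apply hne
    rw [congrFun h s]
    show x s = x (tauF X s)
    rw [tauF_not_mem hs]
  · intro x y x' y' hx hy hxy hxy'
    show (if y = x ∘ tauF X then (1:ℂ) else 0) = (if y' = x' ∘ tauF X then 1 else 0)
    refine if_congr ?_ rfl rfl
    constructor
    · intro h
      funext s
      by_cases hs : s ∈ Sum.inl '' X ∪ Sum.inr '' X
      · rw [← hy s hs]
        rw [congrFun h s]
        show x (tauF X s) = x' (tauF X s)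
        exact hx _ (tauF_mem_image hs)
      · show y' s = x' (tauF X s)
        rw [tauF_not_mem hs, ← hxy' s hs]
    · intro h
      funext s
      by_cases hs : s ∈ Sum.inl '' X ∪ Sum.inr '' X
      · rw [hy s hs]
        rw [congrFun h s]
        show x' (tauF X s) = x (tauF X s)
        exact (hx _ (tauF_mem_image hs)).symm
      · show y s = x (tauF X s)
        rw [tauF_not_mem hs, hxy s hs]

end FlowAux


namespace FlowAux

attribute [local instance] Classical.propDecidable

variable {Λ : Type*} [Fintype Λ] [DecidableEq Λ] {d : ℕ}

/-- tensor "stacking" of two one-copy matrices on the doubled lattice. -/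
def stackM (M N : Matrix (Λ → Fin d) (Λ → Fin d) ℂ) :
    Matrix ((Λ ⊕ Λ) → Fin d) ((Λ ⊕ Λ) → Fin d) ℂ :=
  Matrix.of fun x y => M (x ∘ Sum.inl) (y ∘ Sum.inl) * N (x ∘ Sum.inr) (y ∘ Sum.inr)

lemma stackM_apply (M N : Matrix (Λ → Fin d) (Λ → Fin d) ℂ) (x y : (Λ⊕Λ) → Fin d) :
    stackM M N x y = M (x ∘ Sum.inl) (y ∘ Sum.inl) * N (x ∘ Sum.inr) (y ∘ Sum.inr) := rfl

lemma sum_config_prod (F : (Λ → Fin d) → (Λ → Fin d) → ℂ) :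
    ∑ z : (Λ⊕Λ) → Fin d, F (z ∘ Sum.inl) (z ∘ Sum.inr) = ∑ z₁ : Λ → Fin d, ∑ z₂ : Λ → Fin d, F z₁ z₂ := by
  rw [← Equiv.sum_comp (Equiv.sumArrowEquivProdArrow Λ Λ (Fin d)).symm
    (fun z => F (z ∘ Sum.inl) (z ∘ Sum.inr))]
  rw [Fintype.sum_prod_type]
  apply Finset.sum_congr rfl
  intro z₁ _
  apply Finset.sum_congr rfl
  intro z₂ _
  congr 1 <;> funext r <;> simp [Equiv.sumArrowEquivProdArrow]

lemma stackM_mul (M N P Q : Matrix (Λ → Fin d) (Λ → Fin d) ℂ) :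
    stackM M N * stackM P Q = stackM (M * P) (N * Q) := by
  ext x y
  rw [Matrix.mul_apply, stackM_apply, Matrix.mul_apply, Matrix.mul_apply]
  have : ∀ z : (Λ⊕Λ) → Fin d, stackM M N x z * stackM P Q z y
      = (M (x ∘ Sum.inl) (z ∘ Sum.inl) * P (z ∘ Sum.inl) (y ∘ Sum.inl)) *
        (N (x ∘ Sum.inr) (z ∘ Sum.inr) * Q (z ∘ Sum.inr) (y ∘ Sum.inr)) := by
    intro z
    rw [stackM_apply, stackM_apply]
    ring
  simp only [this]
  rw [sum_config_prod (fun z₁ z₂ => (M (x ∘ Sum.inl) z₁ * P z₁ (y ∘ Sum.inl)) *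
    (N (x ∘ Sum.inr) z₂ * Q z₂ (y ∘ Sum.inr)))]
  rw [Finset.sum_mul_sum]

lemma stackM_one : stackM (1 : Matrix (Λ → Fin d) (Λ → Fin d) ℂ) 1 = 1 := by
  ext x y
  rw [stackM_apply, Matrix.one_apply, Matrix.one_apply, Matrix.one_apply]
  by_cases h : x = y
  · rw [if_pos h, if_pos (by rw [h]), if_pos (by rw [h]), one_mul]
  · have : ¬ (x ∘ Sum.inl = y ∘ Sum.inl ∧ x ∘ Sum.inr = y ∘ Sum.inr) := by
      rintro ⟨h1, h2⟩
      apply h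
      funext s
      cases s with
      | inl r => exact congrFun h1 r
      | inr r => exact congrFun h2 r
    rw [if_neg h]
    by_cases h1 : x ∘ Sum.inl = y ∘ Sum.inl
    · rw [if_pos h1, if_neg (fun h2 => this ⟨h1, h2⟩), one_mul]
    · rw [if_neg h1, zero_mul]

lemma stackM_conjTranspose (M N : Matrix (Λ → Fin d) (Λ → Fin d) ℂ) :
    (stackM M N)ᴴ = stackM Mᴴ Nᴴ := by
  ext x y
  rw [Matrix.conjTranspose_apply, stackM_apply, stackM_apply, star_mul',
    Matrix.conjTranspose_apply, Matrix.conjTranspose_apply]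

lemma stackM_reindex (M N : Matrix (Λ → Fin d) (Λ → Fin d) ℂ) :
    (Matrix.reindex (Equiv.sumArrowEquivProdArrow Λ Λ (Fin d)).symm
      (Equiv.sumArrowEquivProdArrow Λ Λ (Fin d)).symm
      (Matrix.kroneckerMap (· * ·) M N)) = stackM M N := by
  ext x y
  rw [Matrix.reindex_apply, Matrix.submatrix_apply, stackM_apply]
  rw [Equiv.symm_symm]
  rfl

/-- left embedding -/
def embL (M : Matrix (Λ → Fin d) (Λ → Fin d) ℂ) := stackM M (1 : Matrix (Λ → Fin d) (Λ → Fin d) ℂ)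
/-- right embedding -/
def embR (M : Matrix (Λ → Fin d) (Λ → Fin d) ℂ) := stackM (1 : Matrix (Λ → Fin d) (Λ → Fin d) ℂ) M

lemma embL_mul (M N : Matrix (Λ → Fin d) (Λ → Fin d) ℂ) : embL M * embL N = embL (M * N) := by
  rw [embL, embL, embL, stackM_mul, one_mul]

lemma embR_mul (M N : Matrix (Λ → Fin d) (Λ → Fin d) ℂ) : embR M * embR N = embR (M * N) := by
  rw [embR, embR, embR, stackM_mul, one_mul]

lemma embL_one : embL (1 : Matrix (Λ → Fin d) (Λ → Fin d) ℂ) = 1 := stackM_one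

lemma embR_one : embR (1 : Matrix (Λ → Fin d) (Λ → Fin d) ℂ) = 1 := stackM_one

lemma embL_mul_embR (M N : Matrix (Λ → Fin d) (Λ → Fin d) ℂ) :
    embL M * embR N = stackM M N := by
  rw [embL, embR, stackM_mul, mul_one, one_mul]

lemma embR_mul_embL (M N : Matrix (Λ → Fin d) (Λ → Fin d) ℂ) :
    embR N * embL M = stackM M N := by
  rw [embL, embR, stackM_mul, mul_one, one_mul]

lemma SW_univ_conj (M N : Matrix (Λ → Fin d) (Λ → Fin d) ℂ) :
    SW d Set.univ * stackM M N * SW d Set.univ = stackM N M := by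
  ext x y
  rw [Matrix.mul_assoc, SW_mul_apply, mul_SW_apply, stackM_apply, stackM_apply]
  have h1 : ((x ∘ tauF Set.univ) ∘ Sum.inl : Λ → Fin d) = x ∘ Sum.inr := by
    funext r; show x (tauF Set.univ (Sum.inl r)) = x (Sum.inr r)
    simp [tauF]
  have h2 : ((x ∘ tauF Set.univ) ∘ Sum.inr : Λ → Fin d) = x ∘ Sum.inl := by
    funext r; show x (tauF Set.univ (Sum.inr r)) = x (Sum.inl r)
    simp [tauF]
  have h3 : ((y ∘ tauF Set.univ) ∘ Sum.inl : Λ → Fin d) = y ∘ Sum.inr := by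
    funext r; show y (tauF Set.univ (Sum.inl r)) = y (Sum.inr r)
    simp [tauF]
  have h4 : ((y ∘ tauF Set.univ) ∘ Sum.inr : Λ → Fin d) = y ∘ Sum.inl := by
    funext r; show y (tauF Set.univ (Sum.inr r)) = y (Sum.inl r)
    simp [tauF]
  rw [h1, h2, h3, h4]
  ring

lemma embL_mul_SW_univ (M : Matrix (Λ → Fin d) (Λ → Fin d) ℂ) :
    embL M * SW d Set.univ = SW d Set.univ * embR M := by
  have h := SW_univ_conj M (1 : Matrix (Λ → Fin d) (Λ → Fin d) ℂ)
  have h2 : SW d Set.univ * (SW d Set.univ * stackM M 1 * SW d Set.univ) = SW d Set.univ * stackM 1 M := by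
    rw [h]
  rw [← Matrix.mul_assoc, ← Matrix.mul_assoc, SW_mul, symmDiff_self] at h2
  rw [Set.bot_eq_empty, SW_empty, Matrix.one_mul] at h2
  rw [embL, embR, h2]

end FlowAux


namespace FlowAux

attribute [local instance] Classical.propDecidable

variable {Λ : Type*} [Fintype Λ] [DecidableEq Λ] {d : ℕ} {G : Type*} [Group G]
variable {u : G → Matrix (Fin d) (Fin d) ℂ}

lemma unit_mul {ι : Type*} [Fintype ι] [DecidableEq ι] {M N : Matrix ι ι ℂ}
    (hM : IsUnitaryMat M) (hN : IsUnitaryMat N) : IsUnitaryMat (M * N) := by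
  constructor
  · rw [Matrix.conjTranspose_mul]
    calc Nᴴ * Mᴴ * (M * N) = Nᴴ * (Mᴴ * M) * N := by rw [Matrix.mul_assoc, Matrix.mul_assoc, Matrix.mul_assoc]
    _ = Nᴴ * N := by rw [hM.1, Matrix.mul_one]
    _ = 1 := hN.1
  · rw [Matrix.conjTranspose_mul]
    calc M * N * (Nᴴ * Mᴴ) = M * (N * Nᴴ) * Mᴴ := by rw [Matrix.mul_assoc, Matrix.mul_assoc, Matrix.mul_assoc]
    _ = M * Mᴴ := by rw [hN.2, Matrix.mul_one]
    _ = 1 := hM.2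

lemma unit_conjT {ι : Type*} [Fintype ι] [DecidableEq ι] {M : Matrix ι ι ℂ}
    (hM : IsUnitaryMat M) : IsUnitaryMat Mᴴ := by
  constructor
  · rw [Matrix.conjTranspose_conjTranspose]; exact hM.2
  · rw [Matrix.conjTranspose_conjTranspose]; exact hM.1

lemma unit_one {ι : Type*} [Fintype ι] [DecidableEq ι] :
    IsUnitaryMat (1 : Matrix ι ι ℂ) := by
  constructor <;> simp

lemma unit_stackM {M N : Matrix (Λ → Fin d) (Λ → Fin d) ℂ}
    (hM : IsUnitaryMat M) (hN : IsUnitaryMat N) : IsUnitaryMat (stackM M N) := by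
  constructor
  · rw [stackM_conjTranspose, stackM_mul, hM.1, hN.1, stackM_one]
  · rw [stackM_conjTranspose, stackM_mul, hM.2, hN.2, stackM_one]

lemma unit_embL {M : Matrix (Λ → Fin d) (Λ → Fin d) ℂ} (hM : IsUnitaryMat M) :
    IsUnitaryMat (embL M) := unit_stackM hM unit_one

lemma unit_embR {M : Matrix (Λ → Fin d) (Λ → Fin d) ℂ} (hM : IsUnitaryMat M) :
    IsUnitaryMat (embR M) := unit_stackM unit_one hM

section Sym

variable (hu_unit : ∀ g, IsUnitaryMat (u g)) (hu_mul : ∀ g h, u (g * h) = u g * u h)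

include hu_unit hu_mul

lemma u_one : u 1 = 1 := by
  have h := hu_mul 1 1
  rw [mul_one] at h
  have h2 : (u 1)ᴴ * u 1 = (u 1)ᴴ * (u 1 * u 1) := by rw [← h]
  rw [(hu_unit 1).1, ← Matrix.mul_assoc, (hu_unit 1).1, Matrix.one_mul] at h2
  exact h2.symm

lemma u_star (g : G) : (u g)ᴴ = u g⁻¹ := by
  have h : u g * u g⁻¹ = 1 := by rw [← hu_mul, mul_inv_cancel, u_one hu_unit hu_mul]
  calc (u g)ᴴ = (u g)ᴴ * (u g * u g⁻¹) := by rw [h, Matrix.mul_one]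
  _ = ((u g)ᴴ * u g) * u g⁻¹ := by rw [Matrix.mul_assoc]
  _ = u g⁻¹ := by rw [(hu_unit g).1, Matrix.one_mul]

lemma symOp_conjT (g : G) :
    (symOp u g : Matrix (Λ → Fin d) (Λ → Fin d) ℂ)ᴴ = symOp u g⁻¹ := by
  ext x y
  rw [Matrix.conjTranspose_apply]
  show star (∏ r, u g (y r) (x r)) = ∏ r, u g⁻¹ (x r) (y r)
  rw [show (star (∏ r, u g (y r) (x r)) : ℂ) = ∏ r, star (u g (y r) (x r)) from
    map_prod (starRingEnd ℂ) _ _]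
  apply Finset.prod_congr rfl
  intro r _
  show star (u g (y r) (x r)) = u g⁻¹ (x r) (y r)
  rw [← u_star hu_unit hu_mul, Matrix.conjTranspose_apply]

lemma gsymm_conjT {M : Matrix (Λ → Fin d) (Λ → Fin d) ℂ} (hM : IsGSymm u M) :
    IsGSymm u Mᴴ := by
  intro g
  have h1 : (symOp u g : Matrix (Λ → Fin d) (Λ → Fin d) ℂ) = (symOp u g⁻¹)ᴴ := by
    rw [symOp_conjT hu_unit hu_mul, inv_inv]
  rw [h1, ← Matrix.conjTranspose_mul, ← Matrix.conjTranspose_mul, hM g⁻¹]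

end Sym

lemma gsymm_mul {M N : Matrix (Λ → Fin d) (Λ → Fin d) ℂ}
    (hM : IsGSymm u M) (hN : IsGSymm u N) : IsGSymm u (M * N) := by
  intro g
  rw [Matrix.mul_assoc, hN g, ← Matrix.mul_assoc, hM g, Matrix.mul_assoc]

lemma gsymm_one : IsGSymm u (1 : Matrix (Λ → Fin d) (Λ → Fin d) ℂ) := by
  intro g
  rw [Matrix.one_mul, Matrix.mul_one]

lemma symOp_stackM (g : G) :
    (symOp u g : Matrix ((Λ ⊕ Λ) → Fin d) ((Λ ⊕ Λ) → Fin d) ℂ)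
      = stackM (symOp u g) (symOp u g) := by
  ext x y
  show (∏ s : Λ ⊕ Λ, u g (x s) (y s)) = _
  rw [Fintype.prod_sum_type, stackM_apply]
  rfl

lemma gsymm_stackM {M N : Matrix (Λ → Fin d) (Λ → Fin d) ℂ}
    (hM : IsGSymm u M) (hN : IsGSymm u N) : IsGSymm u (stackM M N) := by
  intro g
  rw [symOp_stackM, stackM_mul, stackM_mul, hM g, hN g]

lemma gsymm_embL {M : Matrix (Λ → Fin d) (Λ → Fin d) ℂ} (hM : IsGSymm u M) :
    IsGSymm u (embL M) := gsymm_stackM hM gsymm_one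

lemma gsymm_embR {M : Matrix (Λ → Fin d) (Λ → Fin d) ℂ} (hM : IsGSymm u M) :
    IsGSymm u (embR M) := gsymm_stackM gsymm_one hM

lemma gsymm_SW (X : Set Λ) : IsGSymm u (SW d X) := by
  intro g
  ext x y
  rw [SW_mul_apply]
  rw [mul_SW_apply]
  show (∏ s : Λ ⊕ Λ, u g ((x ∘ tauF X) s) (y s)) = (∏ s : Λ ⊕ Λ, u g (x s) ((y ∘ tauF X) s))
  rw [← Equiv.prod_comp (tauE X) (fun s => u g (x s) ((y ∘ tauF X) s))]
  apply Finset.prod_congr rfl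
  intro s _
  show u g ((x ∘ tauF X) s) (y s) = u g (x (tauE X s)) ((y ∘ tauF X) (tauE X s))
  show u g (x (tauF X s)) (y s) = u g (x (tauF X s)) (y (tauF X (tauF X s)))
  rw [tauF_invol]

end FlowAux


namespace FlowAux

attribute [local instance] Classical.propDecidable

variable {Λ : Type*} [Fintype Λ] [DecidableEq Λ] {d : ℕ}

lemma supportedOn_embL {S : Set Λ} {M : Matrix (Λ → Fin d) (Λ → Fin d) ℂ}
    (hM : SupportedOn S M) : SupportedOn (Sum.inl '' S) (embL M) := by
  constructor
  · rintro x y ⟨s, hs, hne⟩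
    rw [embL, stackM_apply]
    cases s with
    | inl r =>
      have hr : r ∉ S := fun h => hs ⟨r, h, rfl⟩
      rw [hM.1 (x ∘ Sum.inl) (y ∘ Sum.inl) ⟨r, hr, hne⟩, zero_mul]
    | inr r =>
      have : (1 : Matrix (Λ → Fin d) (Λ → Fin d) ℂ) (x ∘ Sum.inr) (y ∘ Sum.inr) = 0 := by
        apply Matrix.one_apply_ne
        intro h
        exact hne (congrFun h r)
      rw [this, mul_zero]
  · intro x y x' y' hx hy hxy hxy'
    rw [embL, stackM_apply, stackM_apply]
    have e1 : M (x ∘ Sum.inl) (y ∘ Sum.inl) = M (x' ∘ Sum.inl) (y' ∘ Sum.inl) := by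
      apply hM.2
      · intro r hr; exact hx (Sum.inl r) ⟨r, hr, rfl⟩
      · intro r hr; exact hy (Sum.inl r) ⟨r, hr, rfl⟩
      · intro r hr
        apply hxy (Sum.inl r)
        rintro ⟨t, ht, hte⟩
        cases hte; exact hr ht
      · intro r hr
        apply hxy' (Sum.inl r)
        rintro ⟨t, ht, hte⟩
        cases hte; exact hr ht
    have hinr : ∀ r : Λ, (Sum.inr r : Λ ⊕ Λ) ∉ Sum.inl '' S := by
      rintro r ⟨t, ht, hte⟩; cases hte
    have e2 : (x ∘ Sum.inr : Λ → Fin d) = y ∘ Sum.inr := funext fun r => hxy _ (hinr r)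
    have e3 : (x' ∘ Sum.inr : Λ → Fin d) = y' ∘ Sum.inr := funext fun r => hxy' _ (hinr r)
    rw [e1, e2, e3, Matrix.one_apply_eq, Matrix.one_apply_eq]

lemma supportedOn_embR {S : Set Λ} {M : Matrix (Λ → Fin d) (Λ → Fin d) ℂ}
    (hM : SupportedOn S M) : SupportedOn (Sum.inr '' S) (embR M) := by
  constructor
  · rintro x y ⟨s, hs, hne⟩
    rw [embR, stackM_apply]
    cases s with
    | inr r =>
      have hr : r ∉ S := fun h => hs ⟨r, h, rfl⟩
      rw [hM.1 (x ∘ Sum.inr) (y ∘ Sum.inr) ⟨r, hr, hne⟩, mul_zero]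
    | inl r =>
      have : (1 : Matrix (Λ → Fin d) (Λ → Fin d) ℂ) (x ∘ Sum.inl) (y ∘ Sum.inl) = 0 := by
        apply Matrix.one_apply_ne
        intro h
        exact hne (congrFun h r)
      rw [this, zero_mul]
  · intro x y x' y' hx hy hxy hxy'
    rw [embR, stackM_apply, stackM_apply]
    have e1 : M (x ∘ Sum.inr) (y ∘ Sum.inr) = M (x' ∘ Sum.inr) (y' ∘ Sum.inr) := by
      apply hM.2
      · intro r hr; exact hx (Sum.inr r) ⟨r, hr, rfl⟩
      · intro r hr; exact hy (Sum.inr r) ⟨r, hr, rfl⟩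
      · intro r hr
        apply hxy (Sum.inr r)
        rintro ⟨t, ht, hte⟩
        cases hte; exact hr ht
      · intro r hr
        apply hxy' (Sum.inr r)
        rintro ⟨t, ht, hte⟩
        cases hte; exact hr ht
    have hinl : ∀ r : Λ, (Sum.inl r : Λ ⊕ Λ) ∉ Sum.inr '' S := by
      rintro r ⟨t, ht, hte⟩; cases hte
    have e2 : (x ∘ Sum.inl : Λ → Fin d) = y ∘ Sum.inl := funext fun r => hxy _ (hinl r)
    have e3 : (x' ∘ Sum.inl : Λ → Fin d) = y' ∘ Sum.inl := funext fun r => hxy' _ (hinl r)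
    rw [e1, e2, e3, Matrix.one_apply_eq, Matrix.one_apply_eq]

lemma conj_SWuniv_apply (M : Matrix ((Λ⊕Λ) → Fin d) ((Λ⊕Λ) → Fin d) ℂ)
    (x y : (Λ⊕Λ) → Fin d) :
    (SW d (Set.univ : Set Λ) * M * SW d (Set.univ : Set Λ)) x y
      = M (x ∘ tauF Set.univ) (y ∘ tauF Set.univ) := by
  rw [Matrix.mul_assoc, SW_mul_apply, mul_SW_apply]

lemma supportedOn_conj_SWuniv {T : Set (Λ ⊕ Λ)} {M : Matrix ((Λ⊕Λ) → Fin d) ((Λ⊕Λ) → Fin d) ℂ}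
    (hM : SupportedOn T M) :
    SupportedOn (tauF (Set.univ : Set Λ) '' T)
      (SW d (Set.univ : Set Λ) * M * SW d (Set.univ : Set Λ)) := by
  have hmem : ∀ s : Λ ⊕ Λ, s ∈ tauF Set.univ '' T ↔ tauF Set.univ s ∈ T := by
    intro s
    constructor
    · rintro ⟨t, ht, rfl⟩
      rw [tauF_invol]; exact ht
    · intro h
      exact ⟨tauF Set.univ s, h, tauF_invol _ _⟩
  constructor
  · rintro x y ⟨s, hs, hne⟩
    rw [conj_SWuniv_apply]
    apply hM.1
    refine ⟨tauF Set.univ s, ?_, ?_⟩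
    · intro h
      exact hs ((hmem s).mpr h)
    · show x (tauF Set.univ (tauF Set.univ s)) ≠ y (tauF Set.univ (tauF Set.univ s))
      rw [tauF_invol]; exact hne
  · intro x y x' y' hx hy hxy hxy'
    rw [conj_SWuniv_apply, conj_SWuniv_apply]
    apply hM.2
    · intro t ht
      exact hx (tauF Set.univ t) ((hmem _).mpr (by rw [tauF_invol]; exact ht))
    · intro t ht
      exact hy (tauF Set.univ t) ((hmem _).mpr (by rw [tauF_invol]; exact ht))
    · intro t ht
      refine hxy (tauF Set.univ t) ?_
      intro h
      exact ht (by rw [← tauF_invol Set.univ t]; exact (hmem _).mp h)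
    · intro t ht
      refine hxy' (tauF Set.univ t) ?_
      intro h
      exact ht (by rw [← tauF_invol Set.univ t]; exact (hmem _).mp h)

/-- elementary single-site operator at site `r`. -/
noncomputable def Eop (r : Λ) (a b : Fin d) : Matrix (Λ → Fin d) (Λ → Fin d) ℂ :=
  Matrix.of fun x y => if x r = a ∧ y r = b ∧ ∀ s, s ≠ r → x s = y s then 1 else 0

lemma supportedOn_Eop (r : Λ) (a b : Fin d) : SupportedOn {r} (Eop r a b) := by
  constructor
  · rintro x y ⟨s, hs, hne⟩
    have hs' : s ≠ r := fun h => hs (by rw [h]; rfl)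
    show (if x r = a ∧ y r = b ∧ ∀ t, t ≠ r → x t = y t then (1:ℂ) else 0) = 0
    rw [if_neg]
    rintro ⟨-, -, h⟩
    exact hne (h s hs')
  · intro x y x' y' hx hy hxy hxy'
    show (if x r = a ∧ y r = b ∧ ∀ t, t ≠ r → x t = y t then (1:ℂ) else 0)
      = (if x' r = a ∧ y' r = b ∧ ∀ t, t ≠ r → x' t = y' t then 1 else 0)
    refine if_congr ?_ rfl rfl
    have hxr : x r = x' r := hx r rfl
    have hyr : y r = y' r := hy r rfl
    have h3 : ∀ t, t ≠ r → x t = y t := fun t ht => hxy t (fun h => ht h)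
    have h3' : ∀ t, t ≠ r → x' t = y' t := fun t ht => hxy' t (fun h => ht h)
    constructor
    · rintro ⟨h1, h2, -⟩
      exact ⟨hxr ▸ h1, hyr ▸ h2, h3'⟩
    · rintro ⟨h1, h2, -⟩
      exact ⟨hxr.symm ▸ h1, hyr.symm ▸ h2, h3⟩

end FlowAux


namespace FlowAux

attribute [local instance] Classical.propDecidable

variable {Λ : Type*} [Fintype Λ] [DecidableEq Λ] {d : ℕ}

lemma Eop_apply (r : Λ) (a b : Fin d) (x y : Λ → Fin d) :
    Eop r a b x y = if x r = a ∧ y r = b ∧ ∀ s, s ≠ r → x s = y s then 1 else 0 := rfl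

lemma SW_apply (X : Set Λ) (x y : (Λ⊕Λ) → Fin d) :
    SW d X x y = if y = x ∘ tauF X then 1 else 0 := rfl

lemma tauF_singleton_inl_self (r : Λ) : tauF ({r} : Set Λ) (Sum.inl r) = Sum.inr r := by
  simp [tauF]

lemma tauF_singleton_inr_self (r : Λ) : tauF ({r} : Set Λ) (Sum.inr r) = Sum.inl r := by
  simp [tauF]

lemma tauF_singleton_inl_ne (r s : Λ) (h : s ≠ r) :
    tauF ({r} : Set Λ) (Sum.inl s) = Sum.inl s := by
  simp [tauF, h]

lemma tauF_singleton_inr_ne (r s : Λ) (h : s ≠ r) :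
    tauF ({r} : Set Λ) (Sum.inr s) = Sum.inr s := by
  simp [tauF, h]

lemma SW_singleton (r : Λ) :
    SW d ({r} : Set Λ) = ∑ a : Fin d, ∑ b : Fin d, stackM (Eop r a b) (Eop r b a) := by
  ext x y
  rw [Matrix.sum_apply]
  simp only [Matrix.sum_apply]
  symm
  rw [Finset.sum_eq_single (x (Sum.inl r))]
  rotate_left
  · intro a _ ha
    apply Finset.sum_eq_zero
    intro b _
    rw [stackM_apply]
    have hz : Eop r a b (x ∘ Sum.inl) (y ∘ Sum.inl) = 0 := by
      rw [Eop_apply, if_neg]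
      rintro ⟨h1, -, -⟩
      exact ha h1.symm
    rw [hz, zero_mul]
  · intro h
    exact absurd (Finset.mem_univ _) h
  rw [Finset.sum_eq_single (x (Sum.inr r))]
  rotate_left
  · intro b _ hb
    rw [stackM_apply]
    have hz : Eop r b (x (Sum.inl r)) (x ∘ Sum.inr) (y ∘ Sum.inr) = 0 := by
      rw [Eop_apply, if_neg]
      rintro ⟨h1, -, -⟩
      exact hb h1.symm
    rw [hz, mul_zero]
  · intro h
    exact absurd (Finset.mem_univ _) h
  rw [stackM_apply, Eop_apply, Eop_apply, SW_apply]
  by_cases h : y = x ∘ tauF ({r} : Set Λ)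
  · rw [if_pos h, if_pos, if_pos, one_mul]
    · refine ⟨rfl, ?_, ?_⟩
      · show y (Sum.inr r) = x (Sum.inl r)
        rw [congrFun h (Sum.inr r)]
        show x (tauF ({r} : Set Λ) (Sum.inr r)) = x (Sum.inl r)
        rw [tauF_singleton_inr_self]
      · intro s hs
        show x (Sum.inr s) = y (Sum.inr s)
        rw [congrFun h (Sum.inr s)]
        show x (Sum.inr s) = x (tauF ({r} : Set Λ) (Sum.inr s))
        rw [tauF_singleton_inr_ne r s hs]
    · refine ⟨rfl, ?_, ?_⟩
      · show y (Sum.inl r) = x (Sum.inr r)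
        rw [congrFun h (Sum.inl r)]
        show x (tauF ({r} : Set Λ) (Sum.inl r)) = x (Sum.inr r)
        rw [tauF_singleton_inl_self]
      · intro s hs
        show x (Sum.inl s) = y (Sum.inl s)
        rw [congrFun h (Sum.inl s)]
        show x (Sum.inl s) = x (tauF ({r} : Set Λ) (Sum.inl s))
        rw [tauF_singleton_inl_ne r s hs]
  · rw [if_neg h]
    by_cases h1 : (x ∘ Sum.inl) r = x (Sum.inl r) ∧ (y ∘ Sum.inl) r = x (Sum.inr r) ∧
        ∀ s, s ≠ r → (x ∘ Sum.inl) s = (y ∘ Sum.inl) s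
    · by_cases h2 : (x ∘ Sum.inr) r = x (Sum.inr r) ∧ (y ∘ Sum.inr) r = x (Sum.inl r) ∧
          ∀ s, s ≠ r → (x ∘ Sum.inr) s = (y ∘ Sum.inr) s
      · exfalso
        apply h
        funext s
        cases s with
        | inl t =>
          by_cases ht : t = r
          · subst ht
            show y (Sum.inl t) = x (tauF ({t} : Set Λ) (Sum.inl t))
            rw [tauF_singleton_inl_self]
            exact h1.2.1
          · show y (Sum.inl t) = x (tauF ({r} : Set Λ) (Sum.inl t))
            rw [tauF_singleton_inl_ne r t ht]
            exact (h1.2.2 t ht).symm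
        | inr t =>
          by_cases ht : t = r
          · subst ht
            show y (Sum.inr t) = x (tauF ({t} : Set Λ) (Sum.inr t))
            rw [tauF_singleton_inr_self]
            exact h2.2.1
          · show y (Sum.inr t) = x (tauF ({r} : Set Λ) (Sum.inr t))
            rw [tauF_singleton_inr_ne r t ht]
            exact (h2.2.2 t ht).symm
      · rw [if_neg h2, mul_zero]
    · rw [if_neg h1, zero_mul]

section LPU

variable [MetricSpace Λ] {ξ : ℝ} {U : Matrix (Λ → Fin d) (Λ → Fin d) ℂ}

lemma gate_suppL (hU : IsStrictLPU ξ U) (r : Λ) :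
    SupportedOn (Sum.inl '' Metric.closedBall r ξ ∪ Sum.inr '' ({r} : Set Λ))
      (embL Uᴴ * SW d ({r} : Set Λ) * embL U) := by
  rw [SW_singleton r]
  simp only [Finset.mul_sum, Finset.sum_mul]
  apply supportedOn_sum
  intro a _
  apply supportedOn_sum
  intro b _
  have key : embL Uᴴ * stackM (Eop r a b) (Eop r b a) * embL U
      = embL (Uᴴ * Eop r a b * U) * embR (Eop r b a) := by
    rw [← embL_mul_embR]
    calc embL Uᴴ * (embL (Eop r a b) * embR (Eop r b a)) * embL U
        = (embL Uᴴ * embL (Eop r a b)) * (embR (Eop r b a) * embL U) := by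
          simp only [Matrix.mul_assoc]
      _ = embL (Uᴴ * Eop r a b) * (embL U * embR (Eop r b a)) := by
          rw [embL_mul, embR_mul_embL, embL_mul_embR]
      _ = (embL (Uᴴ * Eop r a b) * embL U) * embR (Eop r b a) := by
          simp only [Matrix.mul_assoc]
      _ = embL (Uᴴ * Eop r a b * U) * embR (Eop r b a) := by rw [embL_mul]
  rw [key]
  have h1 := supportedOn_embL (M := Uᴴ * Eop r a b * U) (hU.2 r _ (supportedOn_Eop r a b))
  have h2 := supportedOn_embR (M := Eop r b a) (supportedOn_Eop r b a)
  exact SupportedOn.mul (SupportedOn.mono Set.subset_union_left h1)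
    (SupportedOn.mono Set.subset_union_right h2)

lemma conjL_mul (hU : IsStrictLPU ξ U) (X Y : Set Λ) :
    (embL Uᴴ * SW d X * embL U) * (embL Uᴴ * SW d Y * embL U)
      = embL Uᴴ * SW d (symmDiff X Y) * embL U := by
  have hone : embL U * embL Uᴴ = (1 : Matrix ((Λ⊕Λ) → Fin d) ((Λ⊕Λ) → Fin d) ℂ) := by
    rw [embL_mul, hU.1.2, embL_one]
  simp only [Matrix.mul_assoc]
  rw [← Matrix.mul_assoc (embL U) (embL Uᴴ), hone, Matrix.one_mul]
  rw [← Matrix.mul_assoc (SW d X) (SW d Y), SW_mul]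

lemma conjR_mul (hU : IsStrictLPU ξ U) (X Y : Set Λ) :
    (embR Uᴴ * SW d X * embR U) * (embR Uᴴ * SW d Y * embR U)
      = embR Uᴴ * SW d (symmDiff X Y) * embR U := by
  have hone : embR U * embR Uᴴ = (1 : Matrix ((Λ⊕Λ) → Fin d) ((Λ⊕Λ) → Fin d) ℂ) := by
    rw [embR_mul, hU.1.2, embR_one]
  simp only [Matrix.mul_assoc]
  rw [← Matrix.mul_assoc (embR U) (embR Uᴴ), hone, Matrix.one_mul]
  rw [← Matrix.mul_assoc (SW d X) (SW d Y), SW_mul]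

lemma chunk_suppL (hU : IsStrictLPU ξ U) (F : Finset Λ) :
    SupportedOn (Sum.inl '' {s | ∃ t ∈ F, dist s t ≤ ξ} ∪ Sum.inr '' (↑F : Set Λ))
      (embL Uᴴ * SW d (↑F : Set Λ) * embL U) := by
  classical
  induction F using Finset.induction_on with
  | empty =>
    have : embL Uᴴ * SW d (↑(∅ : Finset Λ) : Set Λ) * embL U
        = (1 : Matrix ((Λ⊕Λ) → Fin d) ((Λ⊕Λ) → Fin d) ℂ) := by
      rw [Finset.coe_empty, SW_empty, Matrix.mul_one, embL_mul, hU.1.1, embL_one]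
    rw [this]
    exact supportedOn_one _
  | insert r F hr ih =>
    have hcoe : (↑(insert r F) : Set Λ) = symmDiff ({r} : Set Λ) (↑F : Set Λ) := by
      rw [Finset.coe_insert]
      rw [Disjoint.symmDiff_eq_sup (by
        rw [Set.disjoint_singleton_left]
        exact fun h => hr (Finset.mem_coe.mp h))]
      show insert r (↑F : Set Λ) = {r} ∪ ↑F
      rw [Set.singleton_union]
    have hmat : embL Uᴴ * SW d (↑(insert r F) : Set Λ) * embL U
        = (embL Uᴴ * SW d ({r} : Set Λ) * embL U) * (embL Uᴴ * SW d (↑F : Set Λ) * embL U) := by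
      rw [conjL_mul hU, ← hcoe]
    rw [hmat]
    have hsub1 : Sum.inl '' Metric.closedBall r ξ ∪ Sum.inr '' ({r} : Set Λ)
        ⊆ Sum.inl '' {s | ∃ t ∈ insert r F, dist s t ≤ ξ} ∪ Sum.inr '' (↑(insert r F) : Set Λ) := by
      apply Set.union_subset_union
      · apply Set.image_mono
        intro s hs
        exact ⟨r, Finset.mem_insert_self r F, Metric.mem_closedBall.mp hs⟩
      · apply Set.image_mono
        intro s hs
        cases hs
        exact Finset.mem_coe.mpr (Finset.mem_insert_self r F)
    have hsub2 : Sum.inl '' {s | ∃ t ∈ F, dist s t ≤ ξ} ∪ Sum.inr '' (↑F : Set Λ)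
        ⊆ Sum.inl '' {s | ∃ t ∈ insert r F, dist s t ≤ ξ} ∪ Sum.inr '' (↑(insert r F) : Set Λ) := by
      apply Set.union_subset_union
      · apply Set.image_mono
        rintro s ⟨t, ht, hst⟩
        exact ⟨t, Finset.mem_insert_of_mem ht, hst⟩
      · apply Set.image_mono
        intro s hs
        exact Finset.mem_coe.mpr (Finset.mem_insert_of_mem (Finset.mem_coe.mp hs))
    exact SupportedOn.mul (SupportedOn.mono hsub1 (gate_suppL hU r))
      (SupportedOn.mono hsub2 ih)

lemma symmDiff_univ_univ (X : Set Λ) :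
    symmDiff (symmDiff (Set.univ : Set Λ) X) (Set.univ : Set Λ) = X := by
  ext s
  simp [Set.mem_symmDiff]

lemma embR_eq_conj (M : Matrix (Λ → Fin d) (Λ → Fin d) ℂ) :
    embR M = SW d (Set.univ : Set Λ) * embL M * SW d (Set.univ : Set Λ) := by
  rw [embL, embR, SW_univ_conj]

lemma conjR_eq (X : Set Λ) (hU : IsStrictLPU ξ U) :
    embR Uᴴ * SW d X * embR U
      = SW d (Set.univ : Set Λ) * (embL Uᴴ * SW d X * embL U) * SW d (Set.univ : Set Λ) := by
  rw [embR_eq_conj, embR_eq_conj]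
  have hSWX : SW d (Set.univ : Set Λ) * SW d X * SW d (Set.univ : Set Λ) = SW d X := by
    rw [SW_mul, SW_mul, symmDiff_univ_univ]
  calc SW d (Set.univ : Set Λ) * embL Uᴴ * SW d (Set.univ : Set Λ) * SW d X *
        (SW d (Set.univ : Set Λ) * embL U * SW d (Set.univ : Set Λ))
      = SW d (Set.univ : Set Λ) * embL Uᴴ *
          (SW d (Set.univ : Set Λ) * SW d X * SW d (Set.univ : Set Λ)) *
          (embL U * SW d (Set.univ : Set Λ)) := by
        simp only [Matrix.mul_assoc]
    _ = SW d (Set.univ : Set Λ) * (embL Uᴴ * SW d X * embL U) * SW d (Set.univ : Set Λ) := by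
        rw [hSWX]
        simp only [Matrix.mul_assoc]

lemma chunk_suppR (hU : IsStrictLPU ξ U) (F : Finset Λ) :
    SupportedOn (Sum.inl '' (↑F : Set Λ) ∪ Sum.inr '' {s | ∃ t ∈ F, dist s t ≤ ξ})
      (embR Uᴴ * SW d (↑F : Set Λ) * embR U) := by
  rw [conjR_eq _ hU]
  have h := supportedOn_conj_SWuniv (chunk_suppL hU F)
  have himg : tauF (Set.univ : Set Λ) ''
        (Sum.inl '' {s | ∃ t ∈ F, dist s t ≤ ξ} ∪ Sum.inr '' (↑F : Set Λ))
      = Sum.inl '' (↑F : Set Λ) ∪ Sum.inr '' {s | ∃ t ∈ F, dist s t ≤ ξ} := by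
    rw [Set.image_union, Set.image_image, Set.image_image]
    have e1 : (fun r : Λ => tauF (Set.univ : Set Λ) (Sum.inl r)) = Sum.inr :=
      funext fun r => by simp [tauF]
    have e2 : (fun r : Λ => tauF (Set.univ : Set Λ) (Sum.inr r)) = Sum.inl :=
      funext fun r => by simp [tauF]
    rw [e1, e2]
    exact Set.union_comm _ _
  rw [himg] at h
  exact h

end LPU

end FlowAux


namespace FlowAux

attribute [local instance] Classical.propDecidable

variable {Λ : Type*} [Fintype Λ] [DecidableEq Λ] {d : ℕ}

lemma mem_bar_inl {A1 A2 : Set Λ} {s : Λ} :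
    (Sum.inl s : Λ ⊕ Λ) ∈ (Sum.inl '' A1 ∪ Sum.inr '' A2) ↔ s ∈ A1 := by
  simp

lemma mem_bar_inr {A1 A2 : Set Λ} {s : Λ} :
    (Sum.inr s : Λ ⊕ Λ) ∈ (Sum.inl '' A1 ∪ Sum.inr '' A2) ↔ s ∈ A2 := by
  simp

lemma bar_subset {P Q A1 A2 : Set Λ} (h1 : P ⊆ A1) (h2 : Q ⊆ A2) :
    Sum.inl '' P ∪ Sum.inr '' Q ⊆ Sum.inl '' A1 ∪ Sum.inr '' A2 :=
  Set.union_subset_union (Set.image_mono h1) (Set.image_mono h2)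

lemma bar_subset_compl {P Q A1 A2 : Set Λ} (h1 : ∀ s ∈ P, s ∉ A1) (h2 : ∀ s ∈ Q, s ∉ A2) :
    Sum.inl '' P ∪ Sum.inr '' Q ⊆ (Sum.inl '' A1 ∪ Sum.inr '' A2)ᶜ := by
  rintro p (⟨s, hs, rfl⟩ | ⟨s, hs, rfl⟩)
  · rw [Set.mem_compl_iff, mem_bar_inl]
    exact h1 s hs
  · rw [Set.mem_compl_iff, mem_bar_inr]
    exact h2 s hs

lemma symmDiff_compl_self_univ (A' : Set Λ) : symmDiff A' A'ᶜ = (Set.univ : Set Λ) := by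
  ext s
  by_cases h : s ∈ A' <;> simp [Set.mem_symmDiff, h]

section LPU

variable [MetricSpace Λ] {ξ : ℝ} {U : Matrix (Λ → Fin d) (Λ → Fin d) ℂ}

lemma master_decomp (hU : IsStrictLPU ξ U) (P Q A' : Set Λ)
    (hPQ : symmDiff P Q = (Set.univ : Set Λ)) :
    stackM Uᴴ U = (embL Uᴴ * SW d P * embL U) *
      (SW d A' * (SW d A'ᶜ * (embR Uᴴ * SW d Q * embR U))) := by
  rw [← Matrix.mul_assoc (SW d A') (SW d A'ᶜ), SW_mul, symmDiff_compl_self_univ]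
  symm
  simp only [Matrix.mul_assoc]
  rw [← Matrix.mul_assoc (embL U) (SW d (Set.univ : Set Λ)), embL_mul_SW_univ]
  simp only [Matrix.mul_assoc]
  rw [← Matrix.mul_assoc (embR U) (embR Uᴴ), embR_mul, hU.1.2, embR_one, Matrix.one_mul]
  rw [← Matrix.mul_assoc (SW d (Set.univ : Set Λ)) (SW d Q), SW_mul]
  rw [← Matrix.mul_assoc (SW d P) (SW d (symmDiff (Set.univ : Set Λ) Q)), SW_mul]
  have hempty : symmDiff P (symmDiff (Set.univ : Set Λ) Q) = (∅ : Set Λ) := by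
    ext s
    have hs := Set.ext_iff.mp hPQ s
    simp only [Set.mem_symmDiff, Set.mem_univ, Set.mem_empty_iff_false, iff_false,
      true_and, not_true, false_and, or_false, iff_true] at hs ⊢
    tauto
  rw [hempty, SW_empty, Matrix.one_mul, embL_mul_embR]

lemma unit_GL (hU : IsStrictLPU ξ U) (X : Set Λ) :
    IsUnitaryMat (embL Uᴴ * SW d X * embL U) :=
  unit_mul (unit_mul (unit_embL (unit_conjT hU.1)) (SW_unitary X)) (unit_embL hU.1)

lemma unit_GR (hU : IsStrictLPU ξ U) (X : Set Λ) :
    IsUnitaryMat (embR Uᴴ * SW d X * embR U) :=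
  unit_mul (unit_mul (unit_embR (unit_conjT hU.1)) (SW_unitary X)) (unit_embR hU.1)

variable {G : Type*} [Group G] {u : G → Matrix (Fin d) (Fin d) ℂ}

lemma gsymm_GL (hu_unit : ∀ g, IsUnitaryMat (u g)) (hu_mul : ∀ g h, u (g * h) = u g * u h)
    (hUG : IsGSymm u U) (X : Set Λ) :
    IsGSymm u (embL Uᴴ * SW d X * embL U) :=
  gsymm_mul (gsymm_mul (gsymm_embL (gsymm_conjT hu_unit hu_mul hUG)) (gsymm_SW X))
    (gsymm_embL hUG)

lemma gsymm_GR (hu_unit : ∀ g, IsUnitaryMat (u g)) (hu_mul : ∀ g h, u (g * h) = u g * u h)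
    (hUG : IsGSymm u U) (X : Set Λ) :
    IsGSymm u (embR Uᴴ * SW d X * embR U) :=
  gsymm_mul (gsymm_mul (gsymm_embR (gsymm_conjT hu_unit hu_mul hUG)) (gsymm_SW X))
    (gsymm_embR hUG)

end LPU

end FlowAux

set_option maxHeartbeats 1000000 in
open FlowAux in
/-- Corollary 3 (conservation law): if `(∂_{4ξ}A) ∩ B = ∅` or `A ∩ (∂_{4ξ}B) = ∅`, then
`Ω_{A,B}(U) = 0` for any `G`-symmetric strict LPU `U` with operator spreading length `ξ`. -/
theorem flow_conservation
    {d : ℕ} (hd : 1 ≤ d) {G : Type} [Group G]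
    (u : G → Matrix (Fin d) (Fin d) ℂ)
    (hu_unit : ∀ g, IsUnitaryMat (u g))
    (hu_mul : ∀ g h, u (g * h) = u g * u h)
    (Φ : LatticeFlow d G u)
    (Λ : Type) [Fintype Λ] [DecidableEq Λ] [MetricSpace Λ]
    (ξ : ℝ) (hξ : 0 ≤ ξ)
    (U : Matrix (Λ → Fin d) (Λ → Fin d) ℂ)
    (hU : IsStrictLPU ξ U) (hUG : IsGSymm u U)
    (A B : Set Λ)
    (hsep : thickBd (4 * ξ) A ∩ B = ∅ ∨ A ∩ thickBd (4 * ξ) B = ∅) :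
    Φ.omega Λ A B U = 0 := by
  classical
  have hUu : IsUnitaryMat U := hU.1
  have hUdu : IsUnitaryMat Uᴴ := unit_conjT hUu
  have hUdG : IsGSymm u Uᴴ := gsymm_conjT hu_unit hu_mul hUG
  have uGL : ∀ X : Set Λ, IsUnitaryMat (embL Uᴴ * SW d X * embL U) := unit_GL hU
  have uGR : ∀ X : Set Λ, IsUnitaryMat (embR Uᴴ * SW d X * embR U) := unit_GR hU
  have gGL : ∀ X : Set Λ, IsGSymm u (embL Uᴴ * SW d X * embL U) :=
    gsymm_GL hu_unit hu_mul hUG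
  have gGR : ∀ X : Set Λ, IsGSymm u (embR Uᴴ * SW d X * embR U) :=
    gsymm_GR hu_unit hu_mul hUG
  rcases hsep with hsep1 | hsep2
  · -- Case 1 : (∂_{4ξ} A) ∩ B = ∅
    have hnot : ∀ b ∈ B, b ∉ thickBd (4*ξ) A := by
      intro b hb hmem
      have : b ∈ thickBd (4*ξ) A ∩ B := ⟨hmem, hb⟩
      rw [hsep1] at this
      exact this
    -- the three regions
    have hstack := Φ.stacking Λ Λ A ∅ A B Uᴴ U hUdu hUdG hUu hUG
    rw [stackM_reindex] at hstack
    have h0 : Φ.omega Λ A ∅ Uᴴ = 0 := by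
      have h := Φ.right_inv Λ A ∅ Uᴴ U hUdu hUdG hUu hUG
        (Or.inr (by rw [Set.compl_empty]; exact supportedOn_univ U))
      rw [hU.1.1, Φ.norm_one] at h
      exact h.symm
    have hvan : Φ.omega (Λ ⊕ Λ) (Sum.inl '' A ∪ Sum.inr '' A)
        (Sum.inl '' (∅ : Set Λ) ∪ Sum.inr '' B) (stackM Uᴴ U) = 0 := by
      -- region definitions
      have hmet : ∀ t ∈ ({r | Metric.closedBall r ξ ⊆ A}ᶜ ∩ {r : Λ | ∀ s, dist s r ≤ 2*ξ → s ∉ A}ᶜ),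
          ∀ s, dist s t ≤ ξ → s ∉ B := by
        rintro t ⟨ht1, ht2⟩ s hst hsB
        rw [Set.mem_compl_iff] at ht1 ht2
        have ht2' : ∃ a, dist a t ≤ 2*ξ ∧ a ∈ A := by
          by_contra hcon
          push_neg at hcon
          exact ht2 (fun w hw => hcon w hw)
        obtain ⟨a, hat, haA⟩ := ht2'
        have hP : ∃ w ∈ A, dist s w ≤ 4*ξ := by
          refine ⟨a, haA, ?_⟩
          have h1 := dist_triangle s t a
          have h2 : dist t a = dist a t := dist_comm t a
          linarith
        have hmem := hnot s hsB
        have hQ : ∀ w, w ∈ Aᶜ → ¬ (dist s w ≤ 4*ξ) := by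
          intro w hw hdw
          exact hmem ⟨hP, ⟨w, hw, hdw⟩⟩
        apply ht1
        intro w hw
        rw [Metric.mem_closedBall] at hw
        by_contra hwA
        refine hQ w hwA ?_
        have h1 := dist_triangle s t w
        have h2 : dist t w = dist w t := dist_comm t w
        linarith
      have hPQ : symmDiff (symmDiff {r : Λ | Metric.closedBall r ξ ⊆ A}
          ({r | Metric.closedBall r ξ ⊆ A}ᶜ ∩ {r : Λ | ∀ s, dist s r ≤ 2*ξ → s ∉ A}))
          ({r | Metric.closedBall r ξ ⊆ A}ᶜ ∩ {r : Λ | ∀ s, dist s r ≤ 2*ξ → s ∉ A}ᶜ)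
          = (Set.univ : Set Λ) := by
        ext s
        simp only [Set.mem_symmDiff, Set.mem_inter_iff, Set.mem_compl_iff, Set.mem_univ,
          iff_true]
        by_cases h1 : s ∈ {r : Λ | Metric.closedBall r ξ ⊆ A} <;>
          by_cases h2 : s ∈ {r : Λ | ∀ s, dist s r ≤ 2*ξ → s ∉ A} <;>
          tauto
      -- support facts
      have hs1 : SupportedOn (Sum.inl '' A ∪ Sum.inr '' A)
          (embL Uᴴ * SW d {r : Λ | Metric.closedBall r ξ ⊆ A} * embL U) := by
        have hfin := Set.toFinite {r : Λ | Metric.closedBall r ξ ⊆ A}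
        have h := chunk_suppL hU hfin.toFinset
        rw [hfin.coe_toFinset] at h
        refine SupportedOn.mono ?_ h
        apply bar_subset
        · rintro s ⟨t, ht, hst⟩
          have htX : Metric.closedBall t ξ ⊆ A := (hfin.mem_toFinset.mp ht : _)
          exact htX (Metric.mem_closedBall.mpr hst)
        · intro s hs
          exact hs (Metric.mem_closedBall.mpr (by rw [dist_self]; exact hξ))
      have hs2 : SupportedOn ((Sum.inl '' A ∪ Sum.inr '' A)ᶜ)
          (embL Uᴴ * SW d ({r | Metric.closedBall r ξ ⊆ A}ᶜ ∩
            {r : Λ | ∀ s, dist s r ≤ 2*ξ → s ∉ A}) * embL U) := by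
        have hfin := Set.toFinite ({r | Metric.closedBall r ξ ⊆ A}ᶜ ∩
          {r : Λ | ∀ s, dist s r ≤ 2*ξ → s ∉ A})
        have h := chunk_suppL hU hfin.toFinset
        rw [hfin.coe_toFinset] at h
        refine SupportedOn.mono ?_ h
        apply bar_subset_compl
        · rintro s ⟨t, ht, hst⟩
          have htX := hfin.mem_toFinset.mp ht
          exact htX.2 s (by linarith)
        · rintro s ⟨-, hs2⟩
          exact hs2 s (by rw [dist_self]; linarith)
      have hs3 : SupportedOn ((Sum.inl '' (∅ : Set Λ) ∪ Sum.inr '' B)ᶜ)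
          (embR Uᴴ * SW d ({r | Metric.closedBall r ξ ⊆ A}ᶜ ∩
            {r : Λ | ∀ s, dist s r ≤ 2*ξ → s ∉ A}ᶜ) * embR U) := by
        have hfin := Set.toFinite ({r | Metric.closedBall r ξ ⊆ A}ᶜ ∩
          {r : Λ | ∀ s, dist s r ≤ 2*ξ → s ∉ A}ᶜ)
        have h := chunk_suppR hU hfin.toFinset
        rw [hfin.coe_toFinset] at h
        refine SupportedOn.mono ?_ h
        apply bar_subset_compl
        · intro s _
          exact Set.notMem_empty s
        · rintro s ⟨t, ht, hst⟩
          exact hmet t (hfin.mem_toFinset.mp ht) s hst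
      have hsA : SupportedOn (Sum.inl '' A ∪ Sum.inr '' A) (SW d A) := supportedOn_SW A
      have hsAc : SupportedOn ((Sum.inl '' A ∪ Sum.inr '' A)ᶜ) (SW d Aᶜ) := by
        refine SupportedOn.mono ?_ (supportedOn_SW Aᶜ)
        exact bar_subset_compl (fun s hs => hs) (fun s hs => hs)
      -- the decomposition
      have h1 := master_decomp hU (symmDiff {r : Λ | Metric.closedBall r ξ ⊆ A}
          ({r | Metric.closedBall r ξ ⊆ A}ᶜ ∩ {r : Λ | ∀ s, dist s r ≤ 2*ξ → s ∉ A}))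
          ({r | Metric.closedBall r ξ ⊆ A}ᶜ ∩ {r : Λ | ∀ s, dist s r ≤ 2*ξ → s ∉ A}ᶜ)
          A hPQ
      rw [← conjL_mul hU] at h1
      rw [Matrix.mul_assoc] at h1
      rw [h1]
      rw [Φ.left_inv (Λ ⊕ Λ) (Sum.inl '' A ∪ Sum.inr '' A)
        (Sum.inl '' (∅ : Set Λ) ∪ Sum.inr '' B) _ _
        (unit_mul (uGL _) (unit_mul (SW_unitary A) (unit_mul (SW_unitary Aᶜ) (uGR _))))
        (gsymm_mul (gGL _) (gsymm_mul (gsymm_SW A) (gsymm_mul (gsymm_SW Aᶜ) (gGR _))))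
        (uGL _) (gGL _) (Or.inl hs1)]
      rw [Φ.left_inv (Λ ⊕ Λ) (Sum.inl '' A ∪ Sum.inr '' A)
        (Sum.inl '' (∅ : Set Λ) ∪ Sum.inr '' B) _ _
        (unit_mul (SW_unitary A) (unit_mul (SW_unitary Aᶜ) (uGR _)))
        (gsymm_mul (gsymm_SW A) (gsymm_mul (gsymm_SW Aᶜ) (gGR _)))
        (uGL _) (gGL _) (Or.inr hs2)]
      rw [Φ.left_inv (Λ ⊕ Λ) (Sum.inl '' A ∪ Sum.inr '' A)
        (Sum.inl '' (∅ : Set Λ) ∪ Sum.inr '' B) _ _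
        (unit_mul (SW_unitary Aᶜ) (uGR _))
        (gsymm_mul (gsymm_SW Aᶜ) (gGR _))
        (SW_unitary A) (gsymm_SW A) (Or.inl hsA)]
      rw [Φ.left_inv (Λ ⊕ Λ) (Sum.inl '' A ∪ Sum.inr '' A)
        (Sum.inl '' (∅ : Set Λ) ∪ Sum.inr '' B) _ _
        (uGR _) (gGR _)
        (SW_unitary Aᶜ) (gsymm_SW Aᶜ) (Or.inr hsAc)]
      have hlast := Φ.right_inv (Λ ⊕ Λ) (Sum.inl '' A ∪ Sum.inr '' A)
        (Sum.inl '' (∅ : Set Λ) ∪ Sum.inr '' B) 1 _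
        unit_one gsymm_one (uGR _) (gGR _) (Or.inr hs3)
      rw [Matrix.one_mul] at hlast
      rw [hlast, Φ.norm_one]
    rw [hvan, h0] at hstack
    linarith
  · -- Case 2 : A ∩ (∂_{4ξ} B) = ∅
    have hnot : ∀ a ∈ A, a ∉ thickBd (4*ξ) B := by
      intro a ha hmem
      have : a ∈ A ∩ thickBd (4*ξ) B := ⟨ha, hmem⟩
      rw [hsep2] at this
      exact this
    have hstack := Φ.stacking Λ Λ (∅ : Set Λ) B A B Uᴴ U hUdu hUdG hUu hUG
    rw [stackM_reindex] at hstack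
    have h0 : Φ.omega Λ (∅ : Set Λ) B Uᴴ = 0 := by
      have h := Φ.left_inv Λ (∅ : Set Λ) B Uᴴ U hUdu hUdG hUu hUG
        (Or.inr (by rw [Set.compl_empty]; exact supportedOn_univ U))
      rw [hU.1.2, Φ.norm_one] at h
      exact h.symm
    have hvan : Φ.omega (Λ ⊕ Λ) (Sum.inl '' (∅ : Set Λ) ∪ Sum.inr '' A)
        (Sum.inl '' B ∪ Sum.inr '' B) (stackM Uᴴ U) = 0 := by
      have hmet : ∀ t ∈ ({r | Metric.closedBall r ξ ⊆ B}ᶜ ∩ {r : Λ | ∀ s, dist s r ≤ 2*ξ → s ∉ B}ᶜ),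
          ∀ s, dist s t ≤ ξ → s ∉ A := by
        rintro t ⟨ht1, ht2⟩ s hst hsA
        rw [Set.mem_compl_iff] at ht1 ht2
        have ht2' : ∃ b, dist b t ≤ 2*ξ ∧ b ∈ B := by
          by_contra hcon
          push_neg at hcon
          exact ht2 (fun w hw => hcon w hw)
        obtain ⟨b, hbt, hbB⟩ := ht2'
        have hP : ∃ w ∈ B, dist s w ≤ 4*ξ := by
          refine ⟨b, hbB, ?_⟩
          have h1 := dist_triangle s t b
          have h2 : dist t b = dist b t := dist_comm t b
          linarith
        have hmem := hnot s hsA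
        have hQ : ∀ w, w ∈ Bᶜ → ¬ (dist s w ≤ 4*ξ) := by
          intro w hw hdw
          exact hmem ⟨hP, ⟨w, hw, hdw⟩⟩
        apply ht1
        intro w hw
        rw [Metric.mem_closedBall] at hw
        by_contra hwB
        refine hQ w hwB ?_
        have h1 := dist_triangle s t w
        have h2 : dist t w = dist w t := dist_comm t w
        linarith
      have hPQ : symmDiff ({r | Metric.closedBall r ξ ⊆ B}ᶜ ∩ {r : Λ | ∀ s, dist s r ≤ 2*ξ → s ∉ B}ᶜ)
          (symmDiff ({r | Metric.closedBall r ξ ⊆ B}ᶜ ∩ {r : Λ | ∀ s, dist s r ≤ 2*ξ → s ∉ B})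
            {r : Λ | Metric.closedBall r ξ ⊆ B})
          = (Set.univ : Set Λ) := by
        ext s
        simp only [Set.mem_symmDiff, Set.mem_inter_iff, Set.mem_compl_iff, Set.mem_univ,
          iff_true]
        by_cases h1 : s ∈ {r : Λ | Metric.closedBall r ξ ⊆ B} <;>
          by_cases h2 : s ∈ {r : Λ | ∀ s, dist s r ≤ 2*ξ → s ∉ B} <;>
          tauto
      have hsY3 : SupportedOn ((Sum.inl '' (∅ : Set Λ) ∪ Sum.inr '' A)ᶜ)
          (embL Uᴴ * SW d ({r | Metric.closedBall r ξ ⊆ B}ᶜ ∩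
            {r : Λ | ∀ s, dist s r ≤ 2*ξ → s ∉ B}ᶜ) * embL U) := by
        have hfin := Set.toFinite ({r | Metric.closedBall r ξ ⊆ B}ᶜ ∩
          {r : Λ | ∀ s, dist s r ≤ 2*ξ → s ∉ B}ᶜ)
        have h := chunk_suppL hU hfin.toFinset
        rw [hfin.coe_toFinset] at h
        refine SupportedOn.mono ?_ h
        apply bar_subset_compl
        · intro s _
          exact Set.notMem_empty s
        · intro s hs hsA
          exact hmet s hs s (by rw [dist_self]; exact hξ) hsA
      have hsY1 : SupportedOn (Sum.inl '' B ∪ Sum.inr '' B)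
          (embR Uᴴ * SW d {r : Λ | Metric.closedBall r ξ ⊆ B} * embR U) := by
        have hfin := Set.toFinite {r : Λ | Metric.closedBall r ξ ⊆ B}
        have h := chunk_suppR hU hfin.toFinset
        rw [hfin.coe_toFinset] at h
        refine SupportedOn.mono ?_ h
        apply bar_subset
        · intro s hs
          exact hs (Metric.mem_closedBall.mpr (by rw [dist_self]; exact hξ))
        · rintro s ⟨t, ht, hst⟩
          have htX : Metric.closedBall t ξ ⊆ B := (hfin.mem_toFinset.mp ht : _)
          exact htX (Metric.mem_closedBall.mpr hst)
      have hsY2 : SupportedOn ((Sum.inl '' B ∪ Sum.inr '' B)ᶜ)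
          (embR Uᴴ * SW d ({r | Metric.closedBall r ξ ⊆ B}ᶜ ∩
            {r : Λ | ∀ s, dist s r ≤ 2*ξ → s ∉ B}) * embR U) := by
        have hfin := Set.toFinite ({r | Metric.closedBall r ξ ⊆ B}ᶜ ∩
          {r : Λ | ∀ s, dist s r ≤ 2*ξ → s ∉ B})
        have h := chunk_suppR hU hfin.toFinset
        rw [hfin.coe_toFinset] at h
        refine SupportedOn.mono ?_ h
        apply bar_subset_compl
        · rintro s ⟨-, hs2⟩
          exact hs2 s (by rw [dist_self]; linarith)
        · rintro s ⟨t, ht, hst⟩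
          have htX := hfin.mem_toFinset.mp ht
          exact htX.2 s (by linarith)
      have hsB : SupportedOn (Sum.inl '' B ∪ Sum.inr '' B) (SW d B) := supportedOn_SW B
      have hsBc : SupportedOn ((Sum.inl '' B ∪ Sum.inr '' B)ᶜ) (SW d Bᶜ) := by
        refine SupportedOn.mono ?_ (supportedOn_SW Bᶜ)
        exact bar_subset_compl (fun s hs => hs) (fun s hs => hs)
      have h1 := master_decomp hU ({r | Metric.closedBall r ξ ⊆ B}ᶜ ∩
          {r : Λ | ∀ s, dist s r ≤ 2*ξ → s ∉ B}ᶜ)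
          (symmDiff ({r | Metric.closedBall r ξ ⊆ B}ᶜ ∩ {r : Λ | ∀ s, dist s r ≤ 2*ξ → s ∉ B})
            {r : Λ | Metric.closedBall r ξ ⊆ B})
          B hPQ
      rw [← conjR_mul hU] at h1
      have hsh : SW d B * (SW d Bᶜ *
            ((embR Uᴴ * SW d ({r | Metric.closedBall r ξ ⊆ B}ᶜ ∩
              {r : Λ | ∀ s, dist s r ≤ 2*ξ → s ∉ B}) * embR U) *
             (embR Uᴴ * SW d {r : Λ | Metric.closedBall r ξ ⊆ B} * embR U)))
          = ((SW d B * SW d Bᶜ) *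
             (embR Uᴴ * SW d ({r | Metric.closedBall r ξ ⊆ B}ᶜ ∩
              {r : Λ | ∀ s, dist s r ≤ 2*ξ → s ∉ B}) * embR U)) *
             (embR Uᴴ * SW d {r : Λ | Metric.closedBall r ξ ⊆ B} * embR U) := by
        simp only [Matrix.mul_assoc]
      rw [hsh] at h1
      rw [h1]
      rw [Φ.left_inv (Λ ⊕ Λ) (Sum.inl '' (∅ : Set Λ) ∪ Sum.inr '' A)
        (Sum.inl '' B ∪ Sum.inr '' B) _ _
        (unit_mul (unit_mul (unit_mul (SW_unitary B) (SW_unitary Bᶜ)) (uGR _)) (uGR _))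
        (gsymm_mul (gsymm_mul (gsymm_mul (gsymm_SW B) (gsymm_SW Bᶜ)) (gGR _)) (gGR _))
        (uGL _) (gGL _) (Or.inr hsY3)]
      rw [Φ.right_inv (Λ ⊕ Λ) (Sum.inl '' (∅ : Set Λ) ∪ Sum.inr '' A)
        (Sum.inl '' B ∪ Sum.inr '' B) _ _
        (unit_mul (unit_mul (SW_unitary B) (SW_unitary Bᶜ)) (uGR _))
        (gsymm_mul (gsymm_mul (gsymm_SW B) (gsymm_SW Bᶜ)) (gGR _))
        (uGR _) (gGR _) (Or.inl hsY1)]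
      rw [Φ.right_inv (Λ ⊕ Λ) (Sum.inl '' (∅ : Set Λ) ∪ Sum.inr '' A)
        (Sum.inl '' B ∪ Sum.inr '' B) _ _
        (unit_mul (SW_unitary B) (SW_unitary Bᶜ))
        (gsymm_mul (gsymm_SW B) (gsymm_SW Bᶜ))
        (uGR _) (gGR _) (Or.inr hsY2)]
      rw [Φ.right_inv (Λ ⊕ Λ) (Sum.inl '' (∅ : Set Λ) ∪ Sum.inr '' A)
        (Sum.inl '' B ∪ Sum.inr '' B) _ _
        (SW_unitary B) (gsymm_SW B)
        (SW_unitary Bᶜ) (gsymm_SW Bᶜ) (Or.inr hsBc)]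
      have hlast := Φ.right_inv (Λ ⊕ Λ) (Sum.inl '' (∅ : Set Λ) ∪ Sum.inr '' A)
        (Sum.inl '' B ∪ Sum.inr '' B) 1 _
        unit_one gsymm_one (SW_unitary B) (gsymm_SW B) (Or.inl hsB)
      rw [Matrix.one_mul] at hlast
      rw [hlast, Φ.norm_one]
    rw [hvan, h0] at hstack
    linarith
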